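/- (The evanescent field does not contribute to the far-field pattern.) Let k > 0, R₀ > 0, M ≥ 0 and κ > 0, and let q : ℝ² → ℂ be differentiable on {x : ‖x‖ > R₀} with ‖q(x)‖ ≤ M·exp(−κ‖x‖) and ‖fderiv ℝ q x‖ ≤ M·exp(−κ‖x‖) for all ‖x‖ > R₀. Then for every unit vector x̂ ∈ ℝ², the far-field functional of q over the circle of radius R tends to zero: FF_R(q, x̂) → 0 as R → ∞. -/

import Mathlib

noncomputable section

open MeasureTheory Filter

/-- The point `R·(cos θ, sin θ)` on the circle of radius `R`. -/
def circPt (R θ : ℝ) : EuclideanSpace ℝ (Fin 2) :=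
  (WithLp.equiv 2 (Fin 2 → ℝ)).symm ![R * Real.cos θ, R * Real.sin θ]

/-- The far-field functional
`FF_R(p, x̂) = ∫_{∂B_R} ( p ∂_ν e^{−ik x̂·y} − ∂_ν p e^{−ik x̂·y} ) ds`,
expressed as a parametrized integral over the circle of radius `R`. -/
def FF (k R : ℝ) (p : EuclideanSpace ℝ (Fin 2) → ℂ) (xhat : EuclideanSpace ℝ (Fin 2)) : ℂ :=
  ∫ θ in (0 : ℝ)..(2 * Real.pi),
    (p (circPt R θ) * (-Complex.I * (k : ℂ) * ((inner ℝ xhat (circPt 1 θ) : ℝ) : ℂ))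
          * Complex.exp (-Complex.I * (k : ℂ) * ((inner ℝ xhat (circPt R θ) : ℝ) : ℂ))
        - (fderiv ℝ p (circPt R θ) (circPt 1 θ))
          * Complex.exp (-Complex.I * (k : ℂ) * ((inner ℝ xhat (circPt R θ) : ℝ) : ℂ))) * (R : ℂ)

lemma norm_circPt (R θ : ℝ) : ‖circPt R θ‖ = |R| := by
  have h : ‖circPt R θ‖ = Real.sqrt ((R * Real.cos θ) ^ 2 + (R * Real.sin θ) ^ 2) := by
    simp [circPt, EuclideanSpace.norm_eq, Fin.sum_univ_two, sq_abs]
  rw [h]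
  have : (R * Real.cos θ) ^ 2 + (R * Real.sin θ) ^ 2 = R ^ 2 := by
    have := Real.sin_sq_add_cos_sq θ; ring_nf; nlinarith
  rw [this, Real.sqrt_sq_eq_abs]

lemma norm_exp_phase (k r : ℝ) :
    ‖Complex.exp (-Complex.I * (k : ℂ) * (r : ℂ))‖ = 1 := by
  have hre : (-Complex.I * (k : ℂ) * (r : ℂ)).re = 0 := by simp
  rw [Complex.norm_exp, hre, Real.exp_zero]

/-- An exponentially decaying evanescent field does not contribute to
the far-field pattern: `FF_R(q, x̂) → 0` as `R → ∞`. -/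
theorem evanescent_no_farfield (k R₀ M κ : ℝ) (hk : 0 < k) (hR₀ : 0 < R₀)
    (hM : 0 ≤ M) (hκ : 0 < κ) (q : EuclideanSpace ℝ (Fin 2) → ℂ)
    (hq : ∀ x : EuclideanSpace ℝ (Fin 2), R₀ < ‖x‖ → DifferentiableAt ℝ q x)
    (hqb : ∀ x : EuclideanSpace ℝ (Fin 2), R₀ < ‖x‖ → ‖q x‖ ≤ M * Real.exp (-κ * ‖x‖))
    (hqd : ∀ x : EuclideanSpace ℝ (Fin 2), R₀ < ‖x‖ →
      ‖fderiv ℝ q x‖ ≤ M * Real.exp (-κ * ‖x‖))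
    (xhat : EuclideanSpace ℝ (Fin 2)) (hxhat : ‖xhat‖ = 1) :
    Tendsto (fun R => FF k R q xhat) atTop (nhds 0) := by
  rw [tendsto_zero_iff_norm_tendsto_zero]
  have hbound : ∀ᶠ R in atTop, ‖FF k R q xhat‖ ≤
      (M * (k + 1) * Real.exp (-κ * R) * R) * |2 * Real.pi - 0| := by
    filter_upwards [eventually_gt_atTop (max R₀ 0)] with R hR
    have hR0 : 0 < R := lt_of_le_of_lt (le_max_right _ _) hR
    have hRR₀ : R₀ < R := lt_of_le_of_lt (le_max_left _ _) hR
    apply intervalIntegral.norm_integral_le_of_norm_le_const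
    intro θ _
    set y := circPt R θ with hy
    have hny : ‖y‖ = R := by rw [hy, norm_circPt, abs_of_pos hR0]
    have hyR₀ : R₀ < ‖y‖ := by rw [hny]; exact hRR₀
    have h1 : ‖circPt 1 θ‖ = 1 := by rw [norm_circPt]; norm_num
    have hip : |(inner ℝ xhat (circPt 1 θ) : ℝ)| ≤ 1 := by
      calc |(inner ℝ xhat (circPt 1 θ) : ℝ)| ≤ ‖xhat‖ * ‖circPt 1 θ‖ :=
            abs_real_inner_le_norm _ _
        _ = 1 := by rw [hxhat, h1]; ring
    have hqy : ‖q y‖ ≤ M * Real.exp (-κ * R) := by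
      have := hqb y hyR₀; rwa [hny] at this
    have hDy : ‖fderiv ℝ q y (circPt 1 θ)‖ ≤ M * Real.exp (-κ * R) := by
      calc ‖fderiv ℝ q y (circPt 1 θ)‖ ≤ ‖fderiv ℝ q y‖ * ‖circPt 1 θ‖ :=
            (fderiv ℝ q y).le_opNorm _
        _ = ‖fderiv ℝ q y‖ := by rw [h1, mul_one]
        _ ≤ M * Real.exp (-κ * R) := by have := hqd y hyR₀; rwa [hny] at this
    have he : ∀ r : ℝ, ‖Complex.exp (-Complex.I * (k : ℂ) * (r : ℂ))‖ = 1 :=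
      fun r => norm_exp_phase k r
    rw [norm_mul, norm_sub_rev]
    have hA : ‖q y * (-Complex.I * (k : ℂ) * ((inner ℝ xhat (circPt 1 θ) : ℝ) : ℂ))
        * Complex.exp (-Complex.I * (k : ℂ) * ((inner ℝ xhat y : ℝ) : ℂ))‖
        ≤ M * Real.exp (-κ * R) * k := by
      rw [norm_mul, norm_mul, he]
      have hc : ‖(-Complex.I * (k : ℂ) * ((inner ℝ xhat (circPt 1 θ) : ℝ) : ℂ))‖ ≤ k := by
        rw [norm_mul, norm_mul]
        simp only [norm_neg, Complex.norm_I, Complex.norm_real, Complex.norm_natCast,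
          one_mul, Real.norm_eq_abs]
        calc |k| * |(inner ℝ xhat (circPt 1 θ) : ℝ)| ≤ |k| * 1 :=
              mul_le_mul_of_nonneg_left hip (abs_nonneg _)
          _ = k := by rw [mul_one, abs_of_pos hk]
      calc ‖q y‖ * ‖(-Complex.I * (k : ℂ) * ((inner ℝ xhat (circPt 1 θ) : ℝ) : ℂ))‖ * 1
          = ‖q y‖ * ‖(-Complex.I * (k : ℂ) * ((inner ℝ xhat (circPt 1 θ) : ℝ) : ℂ))‖ := by ring
        _ ≤ (M * Real.exp (-κ * R)) * k := by
            apply mul_le_mul hqy hc (norm_nonneg _)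
            positivity
    have hB : ‖(fderiv ℝ q y (circPt 1 θ))
        * Complex.exp (-Complex.I * (k : ℂ) * ((inner ℝ xhat y : ℝ) : ℂ))‖
        ≤ M * Real.exp (-κ * R) := by
      rw [norm_mul, he, mul_one]; exact hDy
    have hsum : ‖(fderiv ℝ q y (circPt 1 θ))
          * Complex.exp (-Complex.I * (k : ℂ) * ((inner ℝ xhat y : ℝ) : ℂ))
        - q y * (-Complex.I * (k : ℂ) * ((inner ℝ xhat (circPt 1 θ) : ℝ) : ℂ))
          * Complex.exp (-Complex.I * (k : ℂ) * ((inner ℝ xhat y : ℝ) : ℂ))‖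
        ≤ M * Real.exp (-κ * R) * k + M * Real.exp (-κ * R) := by
      refine le_trans (norm_sub_le _ _) ?_
      have := add_le_add hB hA
      linarith
    calc ‖(fderiv ℝ q y (circPt 1 θ))
          * Complex.exp (-Complex.I * (k : ℂ) * ((inner ℝ xhat y : ℝ) : ℂ))
        - q y * (-Complex.I * (k : ℂ) * ((inner ℝ xhat (circPt 1 θ) : ℝ) : ℂ))
          * Complex.exp (-Complex.I * (k : ℂ) * ((inner ℝ xhat y : ℝ) : ℂ))‖ * ‖(R : ℂ)‖
        ≤ (M * Real.exp (-κ * R) * k + M * Real.exp (-κ * R)) * R := by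
          apply mul_le_mul hsum _ (norm_nonneg _) (by positivity)
          simp [Complex.norm_real, abs_of_pos hR0, le_refl]
      _ = M * (k + 1) * Real.exp (-κ * R) * R := by ring
  have hg : Tendsto (fun R => (M * (k + 1) * Real.exp (-κ * R) * R) * |2 * Real.pi - 0|)
      atTop (nhds 0) := by
    have h1 : Tendsto (fun x : ℝ => x ^ 1 * Real.exp (-x)) atTop (nhds 0) :=
      Real.tendsto_pow_mul_exp_neg_atTop_nhds_zero 1
    have h2 : Tendsto (fun R : ℝ => κ * R) atTop atTop :=
      tendsto_id.const_mul_atTop hκ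
    have h3 : Tendsto (fun R : ℝ => (κ * R) ^ 1 * Real.exp (-(κ * R))) atTop (nhds 0) :=
      h1.comp h2
    have h4 : Tendsto (fun R : ℝ => (M * (k + 1) * |2 * Real.pi - 0| / κ)
        * ((κ * R) ^ 1 * Real.exp (-(κ * R)))) atTop (nhds 0) := by
      simpa using h3.const_mul _
    refine h4.congr fun R => ?_
    field_simp
  exact squeeze_zero' (Eventually.of_forall fun R => norm_nonneg _) hbound hg
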